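/- arXiv:0903.2490 — 6 statements merged into one kernel-verified Lean document; each statement's English description precedes it below -/
import Mathlib

section
/- Let R be a ring such that for every pair of nonisomorphic simple right R-modules S and T one has Ext^1_R(S,T) = {0}. Then every right R-module of finite length whose endomorphism ring is a division ring is a simple module. -/
universe u

open CategoryTheory

/-- `Ext¹_A(S, T) = 0`, formulated via the `Ext` functor on the category of `A`-modules.
Right `R`-modules are treated as modules over `A = Rᵐᵒᵖ`. -/
def Ext1IsZero (A : Type u) [Ring A] (S T : Type u) [AddCommGroup S] [Module A S]
    [AddCommGroup T] [Module A T] : Prop :=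
  Subsingleton (((Ext ℤ (ModuleCat.{u} A) 1).obj (Opposite.op (ModuleCat.of A S))).obj
    (ModuleCat.of A T))

/-- The endomorphism ring of the `A`-module `M` is a division ring:
it is nontrivial and every nonzero endomorphism is invertible. -/
def EndIsDivisionRing (A : Type*) [Ring A] (M : Type*) [AddCommGroup M] [Module A M] : Prop :=
  Nontrivial (Module.End A M) ∧ ∀ f : Module.End A M, f ≠ 0 → IsUnit f

/-- The `A`-module `M` is isotypic: all of its simple subquotients are isomorphic. -/
def IsIsotypicModule (A : Type*) [Ring A] (M : Type*) [AddCommGroup M] [Module A M] : Prop :=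
  ∀ (p₁ p₂ : Submodule A M) (q₁ : Submodule A p₁) (q₂ : Submodule A p₂),
    IsSimpleModule A (p₁ ⧸ q₁) → IsSimpleModule A (p₂ ⧸ q₂) →
      Nonempty ((p₁ ⧸ q₁) ≃ₗ[A] (p₂ ⧸ q₂))

open CategoryTheory Limits in
lemma aux_splitting {A : Type u} [Ring A] {E : Type u} [AddCommGroup E] [Module A E]
    (q : Submodule A E) (h : Ext1IsZero A (E ⧸ q) ↥q) : ∃ r : Submodule A E, IsCompl q r := by
  classical
  set X : ModuleCat A := ModuleCat.of A (E ⧸ q) with hX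
  set Y : ModuleCat A := ModuleCat.of A ↥q with hY
  obtain ⟨P⟩ : Nonempty (ProjectiveResolution X) := ⟨ProjectiveResolution.of X⟩
  set K := P.complex.linearYonedaObj ℤ Y with hK
  have hiso := P.isoExt (R := ℤ) 1 Y
  have hsub : Subsingleton (K.homology 1) := by
    have h' : Subsingleton (((Ext ℤ (ModuleCat.{u} A) 1).obj (Opposite.op X)).obj Y) := h
    have e := ((forget (ModuleCat ℤ)).mapIso hiso).toEquiv
    exact Equiv.subsingleton.symm e
  have hz : IsZero (K.homology 1) := ModuleCat.isZero_of_subsingleton _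
  have hex : (K.sc' 0 1 2).Exact := by
    rw [← HomologicalComplex.exactAt_iff' K 0 1 2 (by simp) (by simp),
      HomologicalComplex.exactAt_iff_isZero_homology]
    exact hz
  rw [ShortComplex.moduleCat_exact_iff] at hex
  -- the quotient map as a morphism
  let mkQ' : ModuleCat.of A E ⟶ X := ModuleCat.ofHom q.mkQ
  have : Epi mkQ' := (ModuleCat.epi_iff_surjective _).mpr (Submodule.mkQ_surjective q)
  let l : P.complex.X 0 ⟶ ModuleCat.of A E := @Projective.factorThru _ _ _ _ _ _ (P.π.f 0 : P.complex.X 0 ⟶ X) mkQ' this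
  have hl : l ≫ mkQ' = P.π.f 0 := Projective.factorThru_comp _ _
  have hd : P.complex.d 1 0 ≫ P.π.f 0 = 0 := P.complex_d_comp_π_f_zero
  have hmem : ∀ x : P.complex.X 1, l (P.complex.d 1 0 x) ∈ q := by
    intro x
    have := congrArg (fun (f : P.complex.X 1 ⟶ X) => f x) (show P.complex.d 1 0 ≫ l ≫ mkQ' = 0 by
      rw [hl]; exact hd)
    simp only [ModuleCat.hom_comp, LinearMap.comp_apply] at this
    rw [← Submodule.Quotient.mk_eq_zero]
    exact this
  let φ : P.complex.X 1 ⟶ Y :=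
    ModuleCat.ofHom (LinearMap.codRestrict q (l.hom.comp (P.complex.d 1 0).hom) hmem)
  have hφ : (K.d 1 2) φ = 0 := by
    have hdd : P.complex.d 2 1 ≫ P.complex.d 1 0 = 0 := P.complex.d_comp_d 2 1 0
    show P.complex.d 2 1 ≫ φ = 0
    apply ModuleCat.hom_ext
    apply LinearMap.ext
    intro x
    apply Subtype.ext
    show l.hom ((P.complex.d 1 0).hom ((P.complex.d 2 1).hom x)) = 0
    have := congrArg (fun (f : P.complex.X 2 ⟶ P.complex.X 0) => l (f x)) hdd
    simp only [ModuleCat.hom_comp, LinearMap.comp_apply] at this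
    change l.hom ((P.complex.d 1 0).hom ((P.complex.d 2 1).hom x)) = l.hom ((0 : P.complex.X 2 →ₗ[A] P.complex.X 0) x) at this
    rw [this, LinearMap.zero_apply, map_zero]
  obtain ⟨ψ₀, hψ₀⟩ := hex φ hφ
  let ψ : P.complex.X 0 ⟶ Y := ψ₀
  have hψ : P.complex.d 1 0 ≫ ψ = φ := hψ₀
  have hψ' : ∀ x : P.complex.X 1, ψ.hom (P.complex.d 1 0 x)
      = ⟨l (P.complex.d 1 0 x), hmem x⟩ := by
    intro x
    have := congrArg (fun (f : P.complex.X 1 ⟶ Y) => f x) hψ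
    exact this
  let σ : P.complex.X 0 ⟶ ModuleCat.of A E := l - ψ ≫ (ModuleCat.ofHom q.subtype : Y ⟶ ModuleCat.of A E)
  have hσ : P.complex.d 1 0 ≫ σ = 0 := by
    have h1 : φ ≫ (ModuleCat.ofHom q.subtype : Y ⟶ ModuleCat.of A E) = P.complex.d 1 0 ≫ l := by
      apply ModuleCat.hom_ext; apply LinearMap.ext; intro x; rfl
    rw [Preadditive.comp_sub, ← Category.assoc, hψ, h1, sub_self]
  -- descend through the cokernel
  obtain ⟨s, hs⟩ := Limits.CokernelCofork.IsColimit.desc' P.isColimitCokernelCofork σ hσ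
  let t : (E ⧸ q) →ₗ[A] E := s.hom
  have hπsurj : Function.Surjective (ModuleCat.Hom.hom (A := P.complex.X 0) (B := ModuleCat.of A (E ⧸ q)) (P.π.f 0)) := by
    exact (ModuleCat.epi_iff_surjective (P.π.f 0)).mp inferInstance
  have hσt : ∀ x : P.complex.X 0, t ((ModuleCat.Hom.hom (A := P.complex.X 0) (B := ModuleCat.of A (E ⧸ q)) (P.π.f 0)) x) = σ x := by
    intro x
    exact congrArg (fun (f : P.complex.X 0 ⟶ ModuleCat.of A E) => f x) hs
  have hσmk : ∀ x : P.complex.X 0, q.mkQ (σ x) = (ModuleCat.Hom.hom (A := P.complex.X 0) (B := ModuleCat.of A (E ⧸ q)) (P.π.f 0)) x := by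
    intro x
    have h1 : q.mkQ (l x) = (ModuleCat.Hom.hom (A := P.complex.X 0) (B := ModuleCat.of A (E ⧸ q)) (P.π.f 0)) x :=
      congrArg (fun (f : P.complex.X 0 ⟶ X) => f x) hl
    have h2 : q.mkQ ((ModuleCat.ofHom q.subtype : Y ⟶ ModuleCat.of A E) (ψ x)) = 0 :=
      (Submodule.Quotient.mk_eq_zero q).mpr (ψ x).2
    calc q.mkQ (σ x) = q.mkQ (l x) - q.mkQ ((ModuleCat.ofHom q.subtype : Y ⟶ ModuleCat.of A E) (ψ x)) := by
          rw [← map_sub]; rfl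
      _ = (ModuleCat.Hom.hom (A := P.complex.X 0) (B := ModuleCat.of A (E ⧸ q)) (P.π.f 0)) x := by rw [h1, h2, sub_zero]
  have hsection : ∀ z : E ⧸ q, q.mkQ (t z) = z := by
    intro z
    obtain ⟨x, rfl⟩ := hπsurj z
    rw [hσt x, hσmk x]
  refine ⟨LinearMap.range t, ?_, ?_⟩
  · rw [disjoint_iff]
    refine Submodule.eq_bot_iff _ |>.mpr ?_
    rintro x ⟨hxq, y, rfl⟩
    have : y = 0 := by
      rw [← hsection y]
      exact (Submodule.Quotient.mk_eq_zero q).mpr hxq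
    rw [this, map_zero]
  · rw [codisjoint_iff, eq_top_iff]
    intro e _
    have hq : e - t (q.mkQ e) ∈ q := by
      rw [← Submodule.Quotient.mk_eq_zero q]
      show q.mkQ _ = 0
      rw [map_sub, hsection, sub_self]
    have : e = (e - t (q.mkQ e)) + t (q.mkQ e) := by abel
    rw [this]
    exact Submodule.add_mem_sup hq ⟨q.mkQ e, rfl⟩

lemma aux_surj {A : Type u} [Ring A]
    (hext : ∀ (S T : Type u) [AddCommGroup S] [Module A S] [AddCommGroup T] [Module A T],
      IsSimpleModule A S → IsSimpleModule A T → IsEmpty (S ≃ₗ[A] T) → Ext1IsZero A S T)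
    (S : Type u) [AddCommGroup S] [Module A S] (hS : IsSimpleModule A S)
    (M : Type u) [AddCommGroup M] [Module A M] (hfl : IsFiniteLength A M) :
    ∀ ι : S →ₗ[A] M, Function.Injective ι → ∃ f : M →ₗ[A] S, Function.Surjective f := by
  haveI := hS
  induction hfl with
  | of_subsingleton =>
    intro ι hι
    haveI := hι.subsingleton
    exact absurd (IsSimpleModule.nontrivial A S) (not_nontrivial_iff_subsingleton.mpr ‹_›)
  | @of_simple_quotient M _ _ N _ hN ih =>
    intro ι hι
    let s : Submodule A M := LinearMap.range ι
    have es : ↥s ≃ₗ[A] S := (LinearEquiv.ofInjective ι hι).symm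
    have hs : IsSimpleModule A ↥s := IsSimpleModule.congr es
    have hcoatom : IsCoatom N := isSimpleModule_iff_isCoatom.mp ‹_›
    by_cases hsN : s ≤ N
    · -- s inside N : use induction hypothesis on N
      let ι' : S →ₗ[A] ↥N := LinearMap.codRestrict N ι (fun x => hsN ⟨x, rfl⟩)
      have hι' : Function.Injective ι' := fun a b hab => hι (congrArg Subtype.val hab)
      obtain ⟨g, hg⟩ := ih ι' hι'
      by_cases hiso : Nonempty ((M ⧸ N) ≃ₗ[A] S)
      · obtain ⟨e⟩ := hiso
        exact ⟨e.toLinearMap.comp N.mkQ, e.surjective.comp (Submodule.mkQ_surjective N)⟩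
      · -- use the Ext splitting
        let K : Submodule A ↥N := LinearMap.ker g
        let K' : Submodule A M := K.map N.subtype
        have hK'N : K' ≤ N := by rintro x ⟨y, -, rfl⟩; exact y.2
        let qE : Submodule A (M ⧸ K') := N.map K'.mkQ
        let h : ↥N →ₗ[A] (M ⧸ K') := K'.mkQ.comp N.subtype
        have hrange : LinearMap.range h = qE := by
          rw [LinearMap.range_comp, Submodule.range_subtype]
        have hker : LinearMap.ker h = K := by
          rw [LinearMap.ker_comp, Submodule.ker_mkQ]
          exact Submodule.comap_map_eq_of_injective (Submodule.injective_subtype N) K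
        have e1 : (↥N ⧸ K) ≃ₗ[A] S := g.quotKerEquivOfSurjective hg
        have e2 : (↥N ⧸ K) ≃ₗ[A] ↥qE :=
          (Submodule.quotEquivOfEq K (LinearMap.ker h) hker.symm).trans
            (h.quotKerEquivRange.trans (LinearEquiv.ofEq _ _ hrange))
        have eq' : ↥qE ≃ₗ[A] S := e2.symm.trans e1
        have e3 : ((M ⧸ K') ⧸ qE) ≃ₗ[A] (M ⧸ N) :=
          Submodule.quotientQuotientEquivQuotient K' N hK'N
        haveI hq1 : IsSimpleModule A ↥qE := IsSimpleModule.congr eq'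
        haveI hq2 : IsSimpleModule A ((M ⧸ K') ⧸ qE) := IsSimpleModule.congr e3
        have hemp : IsEmpty (((M ⧸ K') ⧸ qE) ≃ₗ[A] ↥qE) :=
          ⟨fun e => hiso ⟨(e3.symm.trans e).trans eq'⟩⟩
        have hz := hext ((M ⧸ K') ⧸ qE) ↥qE hq2 hq1 hemp
        obtain ⟨r, hr⟩ := aux_splitting qE hz
        have e4 : ((M ⧸ K') ⧸ r) ≃ₗ[A] ↥qE := Submodule.quotientEquivOfIsCompl r qE hr.symm
        refine ⟨eq'.toLinearMap.comp (e4.toLinearMap.comp (r.mkQ.comp K'.mkQ)), ?_⟩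
        exact eq'.surjective.comp (e4.surjective.comp
          ((Submodule.mkQ_surjective r).comp (Submodule.mkQ_surjective K')))
    · -- s is a complement of N
      have h1 : N ⊔ s = ⊤ := hcoatom.2 _
        (lt_of_le_of_ne le_sup_left (fun hc => hsN (hc ▸ le_sup_right)))
      have hatom : IsAtom s := isSimpleModule_iff_isAtom.mp hs
      have h2 : N ⊓ s = ⊥ := hatom.2 _
        (lt_of_le_of_ne inf_le_right (fun hc => hsN (hc ▸ inf_le_left)))
      have hcompl : IsCompl N s := ⟨disjoint_iff.mpr h2, codisjoint_iff.mpr h1⟩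
      have e5 : (M ⧸ N) ≃ₗ[A] ↥s := Submodule.quotientEquivOfIsCompl N s hcompl
      exact ⟨(es.toLinearMap.comp e5.toLinearMap).comp N.mkQ,
        (es.surjective.comp e5.surjective).comp (Submodule.mkQ_surjective N)⟩

/-- If `Ext¹_R(S, T) = 0` for every pair of nonisomorphic simple right
`R`-modules `S`, `T`, then every right `R`-module of finite length whose endomorphism ring
is a division ring is simple. -/
theorem isSimpleModule_of_finiteLength_of_endIsDivisionRing (R : Type u) [Ring R]
    (hext : ∀ (S T : Type u) [AddCommGroup S] [Module Rᵐᵒᵖ S] [AddCommGroup T] [Module Rᵐᵒᵖ T],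
      IsSimpleModule Rᵐᵒᵖ S → IsSimpleModule Rᵐᵒᵖ T → IsEmpty (S ≃ₗ[Rᵐᵒᵖ] T) →
      Ext1IsZero Rᵐᵒᵖ S T)
    (M : Type u) [AddCommGroup M] [Module Rᵐᵒᵖ M]
    (hfl : IsFiniteLength Rᵐᵒᵖ M) (hM : EndIsDivisionRing Rᵐᵒᵖ M) :
    IsSimpleModule Rᵐᵒᵖ M := by
  haveI := (isFiniteLength_iff_isNoetherian_isArtinian.mp hfl).1
  haveI := (isFiniteLength_iff_isNoetherian_isArtinian.mp hfl).2
  haveI : Nontrivial M := by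
    by_contra hnt
    haveI hss : Subsingleton M := not_nontrivial_iff_subsingleton.mp hnt
    haveI : Subsingleton (Module.End Rᵐᵒᵖ M) :=
      ⟨fun f g => LinearMap.ext fun x => Subsingleton.elim _ _⟩
    exact absurd hM.1 (not_nontrivial_iff_subsingleton.mpr ‹_›)
  obtain ⟨a, ha, -⟩ := (eq_bot_or_exists_atom_le (⊤ : Submodule Rᵐᵒᵖ M)).resolve_left
    (fun h => bot_ne_top (α := Submodule Rᵐᵒᵖ M) h.symm)
  haveI hsa : IsSimpleModule Rᵐᵒᵖ ↥a := isSimpleModule_iff_isAtom.mpr ha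
  obtain ⟨f, hf⟩ := aux_surj hext ↥a hsa M hfl a.subtype (Submodule.injective_subtype a)
  set g : Module.End Rᵐᵒᵖ M := a.subtype.comp f with hg
  have hgne : g ≠ 0 := by
    obtain ⟨y, hya, hy0⟩ := (Submodule.ne_bot_iff a).mp ha.1
    obtain ⟨x, hx⟩ := hf ⟨y, hya⟩
    intro h0
    apply hy0
    have : g x = 0 := by rw [h0]; rfl
    rw [hg] at this
    simp only [LinearMap.comp_apply, hx] at this
    exact this
  obtain ⟨u, hu⟩ := hM.2 g hgne
  have hginj : Function.Injective g := by
    intro x y hxy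
    have h1 : ((↑u⁻¹ * ↑u : Module.End Rᵐᵒᵖ M)) x = ((↑u⁻¹ * ↑u : Module.End Rᵐᵒᵖ M)) y := by
      rw [Module.End.mul_apply, Module.End.mul_apply, hu, hxy]
    rwa [u.inv_mul, Module.End.one_apply, Module.End.one_apply] at h1
  have hfinj : Function.Injective f := fun x y hxy => hginj (by
    rw [hg]; simp only [LinearMap.comp_apply, hxy])
  exact IsSimpleModule.congr (LinearEquiv.ofBijective f ⟨hfinj, hf⟩)
end

section
/- Let R be a ring and suppose that 0 → T → M → S → 0 is a non-split short exact sequence of right R-modules in which S and T are nonisomorphic simple modules. Then End(M_R) is a division ring, and there exist injective ring homomorphisms End(M_R) → End(S_R) and End(M_R) → End(T_R); in particular M is a non-simple module of length 2 whose endomorphism ring is a division ring. -/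
universe u

section Aux

variable {A : Type u} [Ring A] {T M S : Type u} [AddCommGroup T] [Module A T]
  [AddCommGroup M] [Module A M] [AddCommGroup S] [Module A S]

theorem aux_main (hS : IsSimpleModule A S) (hT : IsSimpleModule A T)
    (hST : IsEmpty (S ≃ₗ[A] T))
    (f : T →ₗ[A] M) (g : M →ₗ[A] S)
    (hf : Function.Injective f) (hg : Function.Surjective g)
    (hfg : LinearMap.range f = LinearMap.ker g)
    (hnonsplit : ¬ ∃ N : Submodule A M, IsCompl (LinearMap.range f) N) :
    (Nontrivial (Module.End A M) ∧ ∀ e : Module.End A M, e ≠ 0 → IsUnit e) ∧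
      (∃ φ : Module.End A M →+* Module.End A S, Function.Injective φ) ∧
      (∃ ψ : Module.End A M →+* Module.End A T, Function.Injective ψ) ∧
      ¬ IsSimpleModule A M ∧
      (∃ s : CompositionSeries (Submodule A M), s.head = ⊥ ∧ s.last = ⊤ ∧ s.length = 2) := by
  haveI := hS; haveI := hT
  set K := LinearMap.ker g with hK
  have eK : ↥K ≃ₗ[A] T :=
    ((LinearEquiv.ofInjective f hf).trans (LinearEquiv.ofEq _ _ hfg)).symm
  have eS : (M ⧸ K) ≃ₗ[A] S := g.quotKerEquivOfSurjective hg
  have hKatom : IsAtom K := isSimpleModule_iff_isAtom.mp (IsSimpleModule.congr eK)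
  have hKcoatom : IsCoatom K := isSimpleModule_iff_isCoatom.mp (IsSimpleModule.congr eS)
  -- trichotomy of submodules
  have htri : ∀ N : Submodule A M, N = ⊥ ∨ N = K ∨ N = ⊤ := by
    intro N
    rcases hKatom.le_iff.mp (inf_le_right : N ⊓ K ≤ K) with h1 | h1
    · rcases hKcoatom.le_iff.mp (le_sup_right : K ≤ N ⊔ K) with h2 | h2
      · exact absurd ⟨N, hfg ▸ ⟨disjoint_iff.mpr (inf_comm N K ▸ h1),
          codisjoint_iff.mpr (sup_comm N K ▸ h2)⟩⟩ hnonsplit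
      · left
        have : N ≤ K := by
          have := le_sup_left.trans h2.le
          exact this
        rw [← h1, inf_eq_left.mpr this]
    · rcases hKcoatom.le_iff.mp (le_sup_right : K ≤ N ⊔ K) with h2 | h2
      · right; right
        have hKN : K ≤ N := by rw [← h1]; exact inf_le_left
        rw [← h2, sup_eq_left.mpr hKN]
      · right; left
        have hKN : K ≤ N := by rw [← h1]; exact inf_le_left
        have hNK : N ≤ K := le_sup_left.trans h2.le
        exact le_antisymm hNK hKN
  have hbotM : (⊥ : Submodule A M) ≠ ⊤ := fun hh => hKatom.1 (le_bot_iff.mp (hh ▸ le_top))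
  haveI hMnt : Nontrivial M := Submodule.nontrivial_iff A |>.mp ⟨⊥, ⊤, hbotM⟩
  have hnotsimple : ¬ IsSimpleModule A M := by
    intro h
    rcases h.eq_bot_or_eq_top K with h' | h'
    · exact hKatom.1 h'
    · exact hKcoatom.1 h'
  -- division ring
  haveI : Nontrivial (Module.End A M) := ⟨1, 0, fun h => by
    obtain ⟨x, hx⟩ := exists_ne (0 : M)
    exact hx (by simpa using LinearMap.congr_fun h x)⟩
  have hdiv : ∀ e : Module.End A M, e ≠ 0 → IsUnit e := by
    intro e he0
    have hker : LinearMap.ker e ≠ ⊤ := fun h => he0 (LinearMap.ker_eq_top.mp h)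
    have hrange : LinearMap.range e ≠ ⊥ := fun h => he0 (LinearMap.range_eq_bot.mp h)
    have hkerbot : LinearMap.ker e = ⊥ := by
      rcases htri (LinearMap.ker e) with h | h | h
      · exact h
      · exfalso
        have eRS : ↥(LinearMap.range e) ≃ₗ[A] S :=
          e.quotKerEquivRange.symm.trans ((Submodule.quotEquivOfEq _ _ h).trans eS)
        rcases htri (LinearMap.range e) with h' | h' | h'
        · exact hrange h'
        · exact hST.false (eRS.symm.trans ((LinearEquiv.ofEq _ _ h').trans eK))
        · exact hnotsimple (IsSimpleModule.congr
            ((Submodule.topEquiv.symm.trans (LinearEquiv.ofEq _ _ h'.symm)).trans eRS))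
      · exact absurd h hker
    have hinj : Function.Injective e := LinearMap.ker_eq_bot.mp hkerbot
    have eM : M ≃ₗ[A] ↥(LinearMap.range e) := LinearEquiv.ofInjective e hinj
    rcases htri (LinearMap.range e) with h' | h' | h'
    · exact absurd h' hrange
    · exact absurd (hnotsimple (IsSimpleModule.congr
        ((eM.trans (LinearEquiv.ofEq _ _ h')).trans eK))) not_false
    · exact (Module.End.isUnit_iff e).mpr ⟨hinj, LinearMap.range_eq_top.mp h'⟩
  -- every endomorphism preserves K
  have hmapK : ∀ e : Module.End A M, K ≤ K.comap e := by
    intro e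
    rcases htri (K.comap e) with h | h | h
    · exfalso
      rcases htri (LinearMap.range e) with h' | h' | h'
      · have : K.comap e = ⊤ := by
          rw [eq_top_iff]
          intro x _
          have : e x ∈ LinearMap.range e := ⟨x, rfl⟩
          rw [h'] at this
          simp only [Submodule.mem_bot] at this
          simpa [Submodule.mem_comap, this] using K.zero_mem
        exact hbotM (h.symm.trans this)
      · have : K.comap e = ⊤ := by
          rw [eq_top_iff]
          intro x _
          have : e x ∈ LinearMap.range e := ⟨x, rfl⟩
          rw [h'] at this
          exact this
        exact hbotM (h.symm.trans this)
      · obtain ⟨y, hyK, hy0⟩ := Submodule.ne_bot_iff K |>.mp hKatom.1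
        obtain ⟨x, rfl⟩ := LinearMap.range_eq_top.mp h' y
        have : x ∈ K.comap e := hyK
        rw [h] at this
        simp only [Submodule.mem_bot] at this
        exact hy0 (by rw [this, map_zero])
    · exact le_of_eq h.symm
    · rw [h]; exact le_top
  -- End S is nontrivial etc.
  haveI : Nontrivial S := IsSimpleModule.nontrivial A S
  haveI : Nontrivial T := IsSimpleModule.nontrivial A T
  haveI : Nontrivial (Module.End A S) := ⟨1, 0, fun h => by
    obtain ⟨x, hx⟩ := exists_ne (0 : S)
    exact hx (by simpa using LinearMap.congr_fun h x)⟩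
  haveI : Nontrivial (Module.End A T) := ⟨1, 0, fun h => by
    obtain ⟨x, hx⟩ := exists_ne (0 : T)
    exact hx (by simpa using LinearMap.congr_fun h x)⟩
  -- ring homs
  let Φ : Module.End A M →+* Module.End A (M ⧸ K) :=
    { toFun := fun e => Submodule.mapQ K K e (hmapK e)
      map_one' := by
        refine LinearMap.ext fun x => ?_
        obtain ⟨y, rfl⟩ := Submodule.Quotient.mk_surjective K x
        simp [Submodule.mapQ_apply]
      map_mul' := fun a b => by
        refine LinearMap.ext fun x => ?_
        obtain ⟨y, rfl⟩ := Submodule.Quotient.mk_surjective K x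
        simp [Submodule.mapQ_apply, Module.End.mul_apply]
      map_zero' := by
        refine LinearMap.ext fun x => ?_
        obtain ⟨y, rfl⟩ := Submodule.Quotient.mk_surjective K x
        simp [Submodule.mapQ_apply]
      map_add' := fun a b => by
        refine LinearMap.ext fun x => ?_
        obtain ⟨y, rfl⟩ := Submodule.Quotient.mk_surjective K x
        simp [Submodule.mapQ_apply, LinearMap.add_apply] }
  let ΨS : Module.End A (M ⧸ K) →+* Module.End A S :=
    { toFun := fun u => eS.toLinearMap ∘ₗ u ∘ₗ eS.symm.toLinearMap
      map_one' := by ext x; simp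
      map_mul' := fun a b => by ext x; simp [Module.End.mul_apply]
      map_zero' := by ext x; simp
      map_add' := fun a b => by ext x; simp [LinearMap.add_apply] }
  let Ψ0 : Module.End A M →+* Module.End A ↥K :=
    { toFun := fun e => e.restrict (fun x hx => hmapK e hx)
      map_one' := by
        refine LinearMap.ext fun x => Subtype.ext ?_
        simp [LinearMap.restrict_coe_apply]
      map_mul' := fun a b => by
        refine LinearMap.ext fun x => Subtype.ext ?_
        simp [LinearMap.restrict_coe_apply, Module.End.mul_apply]
      map_zero' := by
        refine LinearMap.ext fun x => Subtype.ext ?_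
        simp [LinearMap.restrict_coe_apply]
      map_add' := fun a b => by
        refine LinearMap.ext fun x => Subtype.ext ?_
        simp [LinearMap.restrict_coe_apply, LinearMap.add_apply] }
  let ΨT : Module.End A ↥K →+* Module.End A T :=
    { toFun := fun u => eK.toLinearMap ∘ₗ u ∘ₗ eK.symm.toLinearMap
      map_one' := by ext x; simp
      map_mul' := fun a b => by ext x; simp [Module.End.mul_apply]
      map_zero' := by ext x; simp
      map_add' := fun a b => by ext x; simp [LinearMap.add_apply] }
  have hφinj : Function.Injective (ΨS.comp Φ) := by
    intro a b hab
    by_contra hne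
    have hu := (hdiv _ (sub_ne_zero.mpr hne)).map (ΨS.comp Φ)
    rw [map_sub, hab, sub_self] at hu
    exact not_isUnit_zero hu
  have hψinj : Function.Injective (ΨT.comp Ψ0) := by
    intro a b hab
    by_contra hne
    have hu := (hdiv _ (sub_ne_zero.mpr hne)).map (ΨT.comp Ψ0)
    rw [map_sub, hab, sub_self] at hu
    exact not_isUnit_zero hu
  refine ⟨⟨‹Nontrivial (Module.End A M)›, hdiv⟩, ⟨ΨS.comp Φ, hφinj⟩,
    ⟨ΨT.comp Ψ0, hψinj⟩, hnotsimple, ?_⟩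
  refine ⟨⟨2, ![⊥, K, ⊤], ?_⟩, ?_, ?_, rfl⟩
  · intro i
    fin_cases i
    · exact hKatom.bot_covBy
    · exact hKcoatom.covBy_top
  · rfl
  · rfl

end Aux


open CategoryTheory

/-- If `0 → T → M → S → 0` is a non-split short exact sequence of right
`R`-modules with `S`, `T` nonisomorphic simple modules, then `End(M)` is a division ring,
it embeds into `End(S)` and into `End(T)` as a ring, and `M` is a non-simple module of
length `2` whose endomorphism ring is a division ring. -/
theorem endIsDivisionRing_of_nonsplit_extension_of_simples (R : Type u) [Ring R]
    (T M S : Type u) [AddCommGroup T] [Module Rᵐᵒᵖ T] [AddCommGroup M] [Module Rᵐᵒᵖ M]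
    [AddCommGroup S] [Module Rᵐᵒᵖ S]
    (hS : IsSimpleModule Rᵐᵒᵖ S) (hT : IsSimpleModule Rᵐᵒᵖ T)
    (hST : IsEmpty (S ≃ₗ[Rᵐᵒᵖ] T))
    (f : T →ₗ[Rᵐᵒᵖ] M) (g : M →ₗ[Rᵐᵒᵖ] S)
    (hf : Function.Injective f) (hg : Function.Surjective g)
    (hfg : LinearMap.range f = LinearMap.ker g)
    (hnonsplit : ¬ ∃ N : Submodule Rᵐᵒᵖ M, IsCompl (LinearMap.range f) N) :
    EndIsDivisionRing Rᵐᵒᵖ M ∧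
      (∃ φ : Module.End Rᵐᵒᵖ M →+* Module.End Rᵐᵒᵖ S, Function.Injective φ) ∧
      (∃ ψ : Module.End Rᵐᵒᵖ M →+* Module.End Rᵐᵒᵖ T, Function.Injective ψ) ∧
      ¬ IsSimpleModule Rᵐᵒᵖ M ∧
      (∃ s : CompositionSeries (Submodule Rᵐᵒᵖ M), s.head = ⊥ ∧ s.last = ⊤ ∧ s.length = 2) := by
  obtain ⟨h1, h2, h3, h4, h5⟩ := aux_main hS hT hST f g hf hg hfg hnonsplit
  exact ⟨h1, h2, h3, h4, h5⟩
end

section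
/- Let R be a ring such that for some pair of nonisomorphic simple right R-modules S and T one has Ext^1_R(S,T) ≠ {0}. Then there exists a right R-module M of finite length that is not simple and whose endomorphism ring End(M_R) is a division ring. -/
universe u

open CategoryTheory

/-- The `A`-module `M` is isotypic: all of its simple subquotients are isomorphic. -/
def IsIsotypic' (A : Type*) [Ring A] (M : Type*) [AddCommGroup M] [Module A M] : Prop :=
  ∀ (p₁ p₂ : Submodule A M) (q₁ : Submodule A p₁) (q₂ : Submodule A p₂),
    IsSimpleModule A (p₁ ⧸ q₁) → IsSimpleModule A (p₂ ⧸ q₂) →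
      Nonempty ((p₁ ⧸ q₁) ≃ₗ[A] (p₂ ⧸ q₂))

theorem exists_nonsplit (A : Type u) [Ring A] (S T : Type u) [AddCommGroup S] [Module A S]
    [AddCommGroup T] [Module A T] (hext : ¬ Ext1IsZero A S T) :
    ∃ (M : Type u) (_ : AddCommGroup M) (_ : Module A M) (i : T →ₗ[A] M) (p : M →ₗ[A] S),
      Function.Injective i ∧ Function.Surjective p ∧ LinearMap.ker p = LinearMap.range i ∧
      ∀ r : M →ₗ[A] T, r ∘ₗ i ≠ LinearMap.id := by
  by_contra h
  push_neg at h
  apply hext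
  obtain ⟨P⟩ : Nonempty (ProjectiveResolution (ModuleCat.of A S)) :=
    HasProjectiveResolution.out
  set T' : ModuleCat.{u} A := ModuleCat.of A T with hT'
  have key : (P.complex.linearYonedaObj ℤ T').ExactAt 1 := by
    rw [HomologicalComplex.exactAt_iff' _ 0 1 2 (by simp) (by simp)]
    rw [ShortComplex.moduleCat_exact_iff]
    intro (f : P.complex.X 1 ⟶ T') hf
    have h2 : P.complex.d 2 1 ≫ f = 0 := by exact hf
    -- unbundle everything into linear maps
    let fl : (P.complex.X 1 : Type u) →ₗ[A] T := f.hom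
    let dl : (P.complex.X 1 : Type u) →ₗ[A] (P.complex.X 0 : Type u) := (P.complex.d 1 0).hom
    let πl : (P.complex.X 0 : Type u) →ₗ[A] S := (P.π.f 0).hom
    have hπd : ∀ x, πl (dl x) = 0 := fun x =>
      congrFun (congrArg (fun (g : P.complex.X 1 ⟶ _) => (g : _ → _))
        P.complex_d_comp_π_f_zero) x
    have hπsurj : Function.Surjective πl :=
      (ModuleCat.epi_iff_surjective (P.π.f 0 : P.complex.X 0 ⟶ ModuleCat.of A S)).mp
        inferInstance
    have hexact0 : ∀ q, πl q = 0 → ∃ x, dl x = q := by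
      have := (ShortComplex.moduleCat_exact_iff _).mp P.exact₀
      exact fun q hq => this q hq
    have hexact1 : ∀ x, dl x = 0 → ∃ y, P.complex.d 2 1 y = x := by
      have := (ShortComplex.moduleCat_exact_iff _).mp (P.exact_succ 0)
      exact fun x hx => this x hx
    have hf2 : ∀ y, fl (P.complex.d 2 1 y) = 0 := fun y =>
      congrFun (congrArg (fun (g : P.complex.X 2 ⟶ T') => (g : _ → _)) h2) y
    -- the pushout module
    set N : Submodule A (T × (P.complex.X 0 : Type u)) :=
      LinearMap.range (LinearMap.prod fl (-dl)) with hN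
    let i : T →ₗ[A] (T × (P.complex.X 0 : Type u)) ⧸ N :=
      N.mkQ ∘ₗ LinearMap.inl A T (P.complex.X 0 : Type u)
    have hle : N ≤ LinearMap.ker (πl ∘ₗ LinearMap.snd A T (P.complex.X 0 : Type u)) := by
      rintro z ⟨x, rfl⟩
      simp [LinearMap.mem_ker, hπd x]
    let p : ((T × (P.complex.X 0 : Type u)) ⧸ N) →ₗ[A] S := N.liftQ _ hle
    have hinj : Function.Injective i := by
      intro t₁ t₂ ht
      have : (t₁ - t₂, (0 : (P.complex.X 0 : Type u))) ∈ N := by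
        rw [← Submodule.Quotient.mk_eq_zero]
        have : i t₁ - i t₂ = 0 := by rw [ht, sub_self]
        simpa [i, Submodule.mkQ_apply, ← Submodule.Quotient.mk_sub, Prod.mk_sub_mk, sub_zero]
          using this
      obtain ⟨x, hx⟩ := this
      have hx1 : fl x = t₁ - t₂ := congrArg Prod.fst hx
      have hx2 : -dl x = 0 := congrArg Prod.snd hx
      obtain ⟨y, rfl⟩ := hexact1 x (by simpa [neg_eq_zero] using hx2)
      have : t₁ - t₂ = 0 := by rw [← hx1, hf2]
      exact sub_eq_zero.mp this
    have hsurj : Function.Surjective p := by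
      intro s
      obtain ⟨q, hq⟩ := hπsurj s
      exact ⟨Submodule.Quotient.mk (0, q), hq⟩
    have hker : LinearMap.ker p = LinearMap.range i := by
      ext z
      obtain ⟨⟨t, q⟩, rfl⟩ := Submodule.Quotient.mk_surjective N z
      constructor
      · intro hz
        have hq : πl q = 0 := hz
        obtain ⟨x, hx⟩ := hexact0 q hq
        refine ⟨t + fl x, ?_⟩
        show Submodule.Quotient.mk (t + fl x, 0) = Submodule.Quotient.mk (t, q)
        rw [Submodule.Quotient.eq]
        exact ⟨x, by simp [Prod.mk_sub_mk, hx]⟩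
      · rintro ⟨t', ht'⟩
        rw [LinearMap.mem_ker, ← ht']
        show πl 0 = 0
        simp
    obtain ⟨r, hr⟩ := h _ _ _ i p hinj hsurj hker
    -- the lift
    let g : (P.complex.X 0 : Type u) →ₗ[A] T :=
      r ∘ₗ N.mkQ ∘ₗ LinearMap.inr A T (P.complex.X 0 : Type u)
    refine ⟨(ModuleCat.ofHom g : P.complex.X 0 ⟶ T'), ?_⟩
    show P.complex.d 1 0 ≫ (ModuleCat.ofHom g : P.complex.X 0 ⟶ T') = f
    apply ModuleCat.hom_ext
    apply LinearMap.ext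
    intro x
    show g (dl x) = f.hom x
    have hmk : (Submodule.Quotient.mk (0, dl x) : _ ⧸ N) = Submodule.Quotient.mk (fl x, 0) := by
      rw [Submodule.Quotient.eq]
      exact ⟨-x, by simp [Prod.mk_sub_mk]⟩
    calc g (dl x) = r (Submodule.Quotient.mk (0, dl x)) := rfl
      _ = r (i (fl x)) := by rw [hmk]; rfl
      _ = (r ∘ₗ i) (fl x) := rfl
      _ = f x := by rw [hr]; rfl
  have hzero := (HomologicalComplex.exactAt_iff_isZero_homology _ 1).mp key
  have hsub : Subsingleton ((P.complex.linearYonedaObj ℤ T').homology 1 : Type u) := by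
    have hid : (𝟙 ((P.complex.linearYonedaObj ℤ T').homology 1) :
        (P.complex.linearYonedaObj ℤ T').homology 1 ⟶ _) = 0 := hzero.eq_of_src _ _
    constructor
    intro a b
    calc a = (𝟙 ((P.complex.linearYonedaObj ℤ T').homology 1) :
            (P.complex.linearYonedaObj ℤ T').homology 1 ⟶ _) a := rfl
      _ = (0 : (P.complex.linearYonedaObj ℤ T').homology 1 ⟶
            (P.complex.linearYonedaObj ℤ T').homology 1) a := by rw [hid]
      _ = (0 : (P.complex.linearYonedaObj ℤ T').homology 1 ⟶
            (P.complex.linearYonedaObj ℤ T').homology 1) b := rfl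
      _ = (𝟙 ((P.complex.linearYonedaObj ℤ T').homology 1) :
            (P.complex.linearYonedaObj ℤ T').homology 1 ⟶ _) b := by rw [hid]
      _ = b := rfl
  exact Equiv.subsingleton ((forget _).mapIso (P.isoExt 1 T')).toEquiv

theorem main_aux (A : Type u) [Ring A] (S T M : Type u) [AddCommGroup S] [Module A S]
    [AddCommGroup T] [Module A T] [AddCommGroup M] [Module A M]
    (hS : IsSimpleModule A S) (hT : IsSimpleModule A T) (hST : IsEmpty (S ≃ₗ[A] T))
    (i : T →ₗ[A] M) (p : M →ₗ[A] S) (hi : Function.Injective i) (hp : Function.Surjective p)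
    (hker : LinearMap.ker p = LinearMap.range i)
    (hnos : ∀ r : M →ₗ[A] T, r ∘ₗ i ≠ LinearMap.id) :
    IsFiniteLength A M ∧ ¬ IsSimpleModule A M ∧ EndIsDivisionRing A M := by
  haveI := hS; haveI := hT
  set T' : Submodule A M := LinearMap.range i with hT'
  let eT : T ≃ₗ[A] T' := LinearEquiv.ofInjective i hi
  haveI simpleT' : IsSimpleModule A T' := IsSimpleModule.congr eT.symm
  let eS : (M ⧸ T') ≃ₗ[A] S :=
    (Submodule.quotEquivOfEq T' (LinearMap.ker p) hker.symm).trans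
      (p.quotKerEquivOfSurjective hp)
  haveI simpleQ : IsSimpleModule A (M ⧸ T') := IsSimpleModule.congr eS
  have hatom : IsAtom T' := isSimpleModule_iff_isAtom.mp simpleT'
  have T'_ne_bot : T' ≠ ⊥ := hatom.1
  have T'_ne_top : T' ≠ ⊤ := by
    intro htop
    have : Subsingleton (M ⧸ T') := Submodule.Quotient.subsingleton_iff.mpr htop
    exact not_subsingleton_iff_nontrivial.mpr (IsSimpleModule.nontrivial A (M ⧸ T')) this
  have not_simple : ¬ IsSimpleModule A M := by
    intro hs
    rcases hs.1.eq_bot_or_eq_top T' with h | h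
    · exact T'_ne_bot h
    · exact T'_ne_top h
  -- the key classification of submodules
  have key : ∀ N : Submodule A M, N = ⊥ ∨ N = T' ∨ N = ⊤ := by
    intro N
    rcases hS.1.eq_bot_or_eq_top (Submodule.map p N) with hmap | hmap
    · -- N ≤ T'
      have hle : N ≤ T' := by
        intro n hn
        rw [← hker, LinearMap.mem_ker]
        have : p n ∈ Submodule.map p N := ⟨n, hn, rfl⟩
        rw [hmap] at this
        simpa using this
      rcases lt_or_eq_of_le hle with hlt | heq
      · exact Or.inl (hatom.2 N hlt)
      · exact Or.inr (Or.inl heq)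
    · -- T' ⊔ N = ⊤
      have hsup : T' ⊔ N = ⊤ := by
        rw [eq_top_iff]
        intro x _
        have : p x ∈ Submodule.map p N := hmap ▸ Submodule.mem_top
        obtain ⟨n, hn, hpn⟩ := this
        have hxn : x - n ∈ T' := by
          rw [← hker, LinearMap.mem_ker, map_sub, hpn, sub_self]
        exact Submodule.mem_sup.mpr ⟨x - n, hxn, n, hn, by abel⟩
      rcases hatom.le_iff.mp (inf_le_right : N ⊓ T' ≤ T') with hinf | hinf
      · -- complement: contradiction with non-splitness
        exfalso
        have hcompl : IsCompl T' N :=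
          ⟨disjoint_iff.mpr (by rwa [inf_comm] at hinf), codisjoint_iff.mpr hsup⟩
        apply hnos (eT.symm.toLinearMap ∘ₗ Submodule.linearProjOfIsCompl T' N hcompl)
        apply LinearMap.ext
        intro t
        have h1 : Submodule.linearProjOfIsCompl T' N hcompl (i t) = eT t := by
          have : i t = ((eT t : T') : M) := rfl
          rw [this]; exact Submodule.linearProjOfIsCompl_apply_left hcompl _
        show eT.symm (Submodule.linearProjOfIsCompl T' N hcompl (i t)) = t
        rw [h1, LinearEquiv.symm_apply_apply]
      · -- T' ≤ N
        right; right
        have hTN : T' ≤ N := hinf ▸ inf_le_left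
        rw [← hsup, sup_eq_right.mpr hTN]
  -- finite length
  haveI : IsSimpleModule A (↥T' ⧸ (⊥ : Submodule A ↥T')) :=
    IsSimpleModule.congr (Submodule.quotEquivOfEqBot (⊥ : Submodule A ↥T') rfl)
  have hflT : IsFiniteLength A ↥T' :=
    IsFiniteLength.of_simple_quotient (N := (⊥ : Submodule A ↥T'))
      IsFiniteLength.of_subsingleton
  have hfl : IsFiniteLength A M := IsFiniteLength.of_simple_quotient (N := T') hflT
  refine ⟨hfl, not_simple, ?_, ?_⟩
  · -- nontrivial endomorphism ring
    haveI : Nontrivial T := IsSimpleModule.nontrivial A T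
    obtain ⟨t, ht⟩ := exists_ne (0 : T)
    have hx : i t ≠ 0 := fun h => ht (hi (by simpa using h))
    exact ⟨1, 0, fun h => hx (by simpa using DFunLike.congr_fun h (i t))⟩
  · -- every nonzero endomorphism is invertible
    intro f hf
    rcases key (LinearMap.ker f) with hk | hk | hk
    · rcases key (LinearMap.range f) with hr | hr | hr
      · exact absurd (LinearMap.range_eq_bot.mp hr) hf
      · exfalso
        apply not_simple
        exact IsSimpleModule.congr (((LinearEquiv.ofInjective f
          (LinearMap.ker_eq_bot.mp hk)).trans (LinearEquiv.ofEq _ _ hr)).trans eT.symm)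
      · exact Module.End.isUnit_iff f |>.mpr
          ⟨LinearMap.ker_eq_bot.mp hk, LinearMap.range_eq_top.mp hr⟩
    · rcases key (LinearMap.range f) with hr | hr | hr
      · exact absurd (LinearMap.range_eq_bot.mp hr) hf
      · exfalso
        refine hST.false ?_
        exact ((((eS.symm.trans (Submodule.quotEquivOfEq T' (LinearMap.ker f) hk.symm)).trans
          f.quotKerEquivRange).trans (LinearEquiv.ofEq _ _ hr)).trans eT.symm)
      · exfalso
        apply not_simple
        have e := f.quotKerEquivOfSurjective (LinearMap.range_eq_top.mp hr)
        exact IsSimpleModule.congr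
          (e.symm.trans ((Submodule.quotEquivOfEq (LinearMap.ker f) T' hk).trans eS))
    · exact absurd (LinearMap.ker_eq_top.mp hk) hf


/-- If some pair of nonisomorphic simple right `R`-modules `S`, `T`
satisfies `Ext¹_R(S, T) ≠ 0`, then there is a right `R`-module of finite length that is not
simple and whose endomorphism ring is a division ring. -/
theorem exists_nonsimple_finiteLength_endIsDivisionRing (R : Type u) [Ring R]
    (S T : Type u) [AddCommGroup S] [Module Rᵐᵒᵖ S] [AddCommGroup T] [Module Rᵐᵒᵖ T]
    (hS : IsSimpleModule Rᵐᵒᵖ S) (hT : IsSimpleModule Rᵐᵒᵖ T)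
    (hST : IsEmpty (S ≃ₗ[Rᵐᵒᵖ] T)) (hext : ¬ Ext1IsZero Rᵐᵒᵖ S T) :
    ∃ (M : Type u) (instG : AddCommGroup M), letI := instG; ∃ instM : Module Rᵐᵒᵖ M,
      letI := instM;
      IsFiniteLength Rᵐᵒᵖ M ∧ ¬ IsSimpleModule Rᵐᵒᵖ M ∧ EndIsDivisionRing Rᵐᵒᵖ M := by
  obtain ⟨M, instG, instM, i, p, hi, hp, hker, hnos⟩ := exists_nonsplit Rᵐᵒᵖ S T hext
  exact ⟨M, instG, instM, main_aux Rᵐᵒᵖ S T M hS hT hST i p hi hp hker hnos⟩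
end

section
/- Let R be a ring and let M be a nonzero isotypic right R-module of finite length that is not simple. Then M has a nonzero nilpotent endomorphism; in particular End(M_R) is not a division ring. -/
universe u

open CategoryTheory

private lemma aux_nilp (A : Type u) [Ring A] (M : Type u) [AddCommGroup M] [Module A M] [Nontrivial M]
    (hfl : IsFiniteLength A M) (hns : ¬ IsSimpleModule A M)
    (hiso : ∀ (p₁ p₂ : Submodule A M) (q₁ : Submodule A p₁) (q₂ : Submodule A p₂),
    IsSimpleModule A (p₁ ⧸ q₁) → IsSimpleModule A (p₂ ⧸ q₂) →
      Nonempty ((p₁ ⧸ q₁) ≃ₗ[A] (p₂ ⧸ q₂))) :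
    ∃ f : Module.End A M, f ≠ 0 ∧ f * f = 0 := by
  obtain ⟨hnoeth, hart⟩ := isFiniteLength_iff_isNoetherian_isArtinian.mp hfl
  obtain ⟨S, hS⟩ : ∃ S : Submodule A M, IsAtom S := by
    rcases (IsAtomic.eq_bot_or_exists_atom_le (⊤ : Submodule A M)) with h | ⟨a, ha, -⟩
    · exact absurd h.symm bot_ne_top
    · exact ⟨a, ha⟩
  have hSne : S ≠ ⊤ := by
    rintro rfl
    have : IsSimpleModule A (⊤ : Submodule A M) := isSimpleModule_iff_isAtom.mpr hS
    exact hns (IsSimpleModule.congr Submodule.topEquiv.symm)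
  obtain ⟨N, hN, hSN⟩ : ∃ N : Submodule A M, IsCoatom N ∧ S ≤ N := by
    rcases (IsCoatomic.eq_top_or_exists_le_coatom S) with h | ⟨N, hN, hSN⟩
    · exact absurd h hSne
    · exact ⟨N, hN, hSN⟩
  have hSsimple : IsSimpleModule A S := isSimpleModule_iff_isAtom.mpr hS
  have hQsimple : IsSimpleModule A (M ⧸ N) := isSimpleModule_iff_isCoatom.mpr hN
  -- set up subquotients
  set q₂ : Submodule A (⊤ : Submodule A M) := N.comap (⊤ : Submodule A M).subtype with hq₂
  have e₂ : ((⊤ : Submodule A M) ⧸ q₂) ≃ₗ[A] (M ⧸ N) :=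
    Submodule.Quotient.equiv q₂ N Submodule.topEquiv (by
      ext y
      simp [hq₂])
  have e₁ : (S ⧸ (⊥ : Submodule A S)) ≃ₗ[A] S := Submodule.quotEquivOfEqBot _ rfl
  have h1 : IsSimpleModule A (S ⧸ (⊥ : Submodule A S)) := IsSimpleModule.congr e₁
  have h2 : IsSimpleModule A ((⊤ : Submodule A M) ⧸ q₂) := IsSimpleModule.congr e₂
  obtain ⟨e⟩ := hiso S ⊤ ⊥ q₂ h1 h2
  -- g : M ⧸ N ≃ S
  let g : (M ⧸ N) ≃ₗ[A] S := (e₂.symm.trans e.symm).trans e₁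
  let f : Module.End A M := S.subtype ∘ₗ (g.toLinearMap ∘ₗ N.mkQ)
  refine ⟨f, ?_, ?_⟩
  · intro h0
    obtain ⟨x, hx⟩ : ∃ x : M, x ∉ N := by
      by_contra h
      push_neg at h
      exact hN.1 (top_le_iff.mp fun y _ => h y)
    have : f x = 0 := by rw [h0]; rfl
    have hmk : N.mkQ x ≠ 0 := by
      simpa [Submodule.Quotient.mk_eq_zero] using hx
    apply hmk
    have : (g (N.mkQ x) : M) = 0 := this
    have : g (N.mkQ x) = 0 := Subtype.ext this
    exact g.injective (by simpa using this)
  · ext x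
    have hmem : f x ∈ N := hSN (g (N.mkQ x)).2
    have h0 : N.mkQ (f x) = 0 := by
      rw [Submodule.mkQ_apply, Submodule.Quotient.mk_eq_zero]; exact hmem
    show S.subtype (g (N.mkQ (f x))) = 0
    rw [h0]; simp


/-- A nonzero isotypic right `R`-module of finite length that is not simple
has a nonzero nilpotent endomorphism; in particular its endomorphism ring is not a division
ring. -/
theorem exists_nilpotent_endomorphism_of_isotypic_not_simple (R : Type u) [Ring R]
    (M : Type u) [AddCommGroup M] [Module Rᵐᵒᵖ M] [Nontrivial M]
    (hiso : IsIsotypicModule Rᵐᵒᵖ M) (hfl : IsFiniteLength Rᵐᵒᵖ M)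
    (hns : ¬ IsSimpleModule Rᵐᵒᵖ M) :
    (∃ f : Module.End Rᵐᵒᵖ M, f ≠ 0 ∧ IsNilpotent f) ∧ ¬ EndIsDivisionRing Rᵐᵒᵖ M := by
  obtain ⟨f, hf0, hff⟩ := aux_nilp Rᵐᵒᵖ M hfl hns hiso
  refine ⟨⟨f, hf0, 2, by rw [pow_two]; exact hff⟩, ?_⟩
  rintro ⟨hnt, hinv⟩
  have hu := hinv f hf0
  have h2 : IsUnit (f * f) := hu.mul hu
  rw [hff] at h2
  exact not_isUnit_zero h2
end

section
/- Let R be a commutative ring and let M be an R-module of finite length whose endomorphism ring End(M_R) is a division ring. Then M is a simple module. -/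
universe u

open CategoryTheory

/-- Over a commutative ring, every module of finite length whose endomorphism
ring is a division ring is simple. -/
theorem isSimpleModule_of_commutative_of_finiteLength (R : Type u) [CommRing R]
    (M : Type u) [AddCommGroup M] [Module R M]
    (hfl : IsFiniteLength R M) (hM : EndIsDivisionRing R M) :
    IsSimpleModule R M := by
  obtain ⟨hnt, hdiv⟩ := hM
  -- M is nontrivial
  have hMnt : Nontrivial M := by
    by_contra h
    rw [not_nontrivial_iff_subsingleton] at h
    have : Subsingleton (Module.End R M) :=
      ⟨fun f g => LinearMap.ext fun x => Subsingleton.elim _ _⟩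
    obtain ⟨f, g, hfg⟩ := hnt
    exact hfg (Subsingleton.elim f g)
  obtain ⟨hNoeth, hArt⟩ := isFiniteLength_iff_isNoetherian_isArtinian.mp hfl
  -- every nonzero endomorphism is bijective
  have hbij : ∀ f : Module.End R M, f ≠ 0 → Function.Bijective f := fun f hf =>
    (Module.End.isUnit_iff f).mp (hdiv f hf)
  -- scalar action: r ∉ annihilator → `r • ·` is bijective
  have hsmul : ∀ r : R, r ∉ Module.annihilator R M → Function.Bijective (LinearMap.lsmul R M r) := by
    intro r hr
    refine hbij _ fun h0 => hr ?_
    rw [Module.mem_annihilator]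
    intro m
    have := DFunLike.congr_fun h0 m
    simpa using this
  -- find a simple submodule (atom)
  haveI : IsAtomic (Submodule R M) :=
    isAtomic_of_orderBot_wellFounded_lt (IsWellFounded.wf)
  have htopne : (⊤ : Submodule R M) ≠ ⊥ := by
    obtain ⟨x, hx⟩ := exists_ne (0 : M)
    intro h
    exact hx (by simpa using (h ▸ Submodule.mem_top : x ∈ (⊥ : Submodule R M)))
  obtain ⟨S, hS, -⟩ := (IsAtomic.eq_bot_or_exists_atom_le (⊤ : Submodule R M)).resolve_left htopne
  haveI hSsimple : IsSimpleModule R S := (isSimpleModule_iff_isAtom).mpr hS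
  -- annihilator of M equals annihilator of S, hence is maximal
  have hann : Module.annihilator R M = Module.annihilator R S := by
    apply le_antisymm
    · intro r hr
      rw [Module.mem_annihilator] at hr ⊢
      intro m
      ext
      simpa using hr (m : M)
    · intro r hr
      by_contra hrM
      rw [Module.mem_annihilator] at hr
      obtain ⟨s, hsS, hs0⟩ := Submodule.ne_bot_iff S |>.mp hS.1
      have : r • s = 0 := by
        have := hr ⟨s, hsS⟩
        simpa [Subtype.ext_iff] using this
      have hinj := (hsmul r hrM).injective
      exact hs0 (hinj (by simpa using this))
  have hmax : (Module.annihilator R M).IsMaximal := by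
    rw [hann]; exact IsSimpleModule.annihilator_isMaximal
  set m := Module.annihilator R M with hm
  -- every nonzero cyclic submodule is an atom
  have hcyc : ∀ x : M, x ≠ 0 → IsAtom (R ∙ x) := by
    intro x hx
    constructor
    · intro h
      exact hx (by simpa using (h ▸ Submodule.mem_span_singleton_self x : x ∈ (⊥ : Submodule R M)))
    · intro N hN
      by_contra hNne
      obtain ⟨y, hyN, hy0⟩ := Submodule.ne_bot_iff N |>.mp hNne
      obtain ⟨r, rfl⟩ := Submodule.mem_span_singleton.mp (hN.le hyN)
      have hrm : r ∉ m := by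
        intro hr
        exact hy0 (Module.mem_annihilator.mp hr x)
      obtain ⟨b, i, him, hbi⟩ := hmax.exists_inv hrm
      have hxN : x ∈ N := by
        have : (b * r) • x + i • x = x := by
          rw [← add_smul, hbi, one_smul]
        have hix : i • x = 0 := Module.mem_annihilator.mp him x
        rw [hix, add_zero] at this
        rw [← this, mul_smul]
        exact N.smul_mem b hyN
      exact hN.2 ((Submodule.span_singleton_le_iff_mem x N).mpr hxN)
  -- M is semisimple
  haveI : IsSemisimpleModule R M := by
    apply IsSemisimpleModule.of_sSup_simples_eq_top
    rw [eq_top_iff]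
    intro x _
    rcases eq_or_ne x 0 with rfl | hx
    · exact Submodule.zero_mem _
    · have hmem : (R ∙ x) ∈ { m : Submodule R M | IsSimpleModule R m } :=
        isSimpleModule_iff_isAtom.mpr (hcyc x hx)
      exact le_sSup hmem (Submodule.mem_span_singleton_self x)
  -- conclude: every nonzero submodule is ⊤
  haveI : Nontrivial (Submodule R M) := ⟨⊥, ⊤, htopne.symm⟩
  refine (isSimpleModule_iff R M).mpr ⟨fun N => ?_⟩
  rcases eq_or_ne N ⊥ with h | h
  · exact Or.inl h
  · right
    obtain ⟨P, hP⟩ := exists_isCompl N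
    set e : Module.End R M := N.subtype.comp (N.linearProjOfIsCompl P hP) with he
    obtain ⟨y, hyN, hy0⟩ := Submodule.ne_bot_iff N |>.mp h
    have he0 : e ≠ 0 := by
      intro h0
      apply hy0
      have : e y = y := by
        simp [he, Submodule.linearProjOfIsCompl_apply_left hP ⟨y, hyN⟩]
        exact congrArg Subtype.val (Submodule.linearProjOfIsCompl_apply_left hP ⟨y, hyN⟩)
      rw [← this, h0]
      rfl
    have hsurj := (hbij e he0).surjective
    rw [eq_top_iff]
    intro z _
    obtain ⟨w, hw⟩ := hsurj z
    rw [← hw]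
    exact (N.linearProjOfIsCompl P hP w).2
end

section
/- Let R be a domain satisfying the right Ore condition, i.e., for all nonzero a, b ∈ R one has aR ∩ bR ≠ {0}. Then every right R-module whose endomorphism ring is a division ring is simple if and only if R is a division ring. -/
universe u

open CategoryTheory

open OreLocalization in
/-- Forward auxiliary lemma: if `A` is a domain with the left Ore condition, and every
`A`-module with division endomorphism ring is simple, then every nonzero element of `A`
is a unit. -/
theorem ore_aux (A : Type u) [Ring A] [IsDomain A]
    (hOre : ∀ r s : A, r ≠ 0 → s ≠ 0 → ∃ r' s' : A, s' * r = r' * s ∧ s' * r ≠ 0)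
    (h : ∀ (M : Type u) [AddCommGroup M] [Module A M],
        EndIsDivisionRing A M → IsSimpleModule A M) :
    ∀ a : A, a ≠ 0 → IsUnit a := by
  classical
  haveI : OreSet (nonZeroDivisors A) := Classical.choice <| by
    rw [OreLocalization.nonempty_oreSet_iff_of_noZeroDivisors]
    intro r s
    rcases eq_or_ne r 0 with rfl | hr
    · exact ⟨0, 1, by simp⟩
    · obtain ⟨r', s', heq, hne⟩ := hOre r s hr (nonZeroDivisors.ne_zero s.2)
      have hs' : s' ≠ 0 := fun h0 => hne (by simp [h0])
      exact ⟨r', ⟨s', mem_nonZeroDivisors_of_ne_zero hs'⟩, heq⟩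
  set Q : Type u := OreLocalization (nonZeroDivisors A) A with hQdef
  -- the scalar action of `A` on `Q` is left multiplication by `numeratorHom`
  have hsmul : ∀ (r : A) (x : Q), r • x = numeratorHom r * x := by
    intro r x
    rw [numeratorHom_apply, ← smul_eq_mul, oreDiv_one_smul]
  have hnum_unit : ∀ s : nonZeroDivisors A, IsUnit (numeratorHom (s : A) : Q) := by
    intro s
    refine ⟨⟨numeratorHom (s : A), (1 : A) /ₒ s, ?_, ?_⟩, rfl⟩
    · rw [numeratorHom_apply]
      simpa using OreLocalization.mul_inv s 1
    · rw [numeratorHom_apply]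
      simpa using OreLocalization.mul_inv 1 s
  have hnum_ne : ∀ s : nonZeroDivisors A, (numeratorHom (s : A) : Q) ≠ 0 :=
    fun s => (hnum_unit s).ne_zero
  -- every endomorphism is right multiplication by its value at 1
  have key : ∀ (f : Module.End A Q) (q : Q), f q = q * f 1 := by
    intro f q
    induction q using OreLocalization.ind with
    | _ r s =>
      have h1 : ((s : A) • (r /ₒ s : Q)) = numeratorHom r := by
        rw [hsmul, numeratorHom_apply, numeratorHom_apply, OreLocalization.mul_cancel]
      refine mul_left_cancel₀ (hnum_ne s) ?_
      calc numeratorHom (s : A) * f (r /ₒ s)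
          = (s : A) • f (r /ₒ s) := (hsmul _ _).symm
        _ = f ((s : A) • (r /ₒ s : Q)) := (f.map_smul _ _).symm
        _ = f (numeratorHom r) := by rw [h1]
        _ = f (r • (1 : Q)) := by rw [hsmul, mul_one]
        _ = r • f 1 := f.map_smul _ _
        _ = numeratorHom r * f 1 := hsmul _ _
        _ = ((s : A) • (r /ₒ s : Q)) * f 1 := by rw [h1]
        _ = numeratorHom (s : A) * ((r /ₒ s : Q) * f 1) := by rw [hsmul, mul_assoc]
  have hend : EndIsDivisionRing A Q := by
    constructor
    · refine ⟨1, 0, fun hc => one_ne_zero (α := Q) ?_⟩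
      simpa using LinearMap.congr_fun hc (1 : Q)
    · intro f hf
      have hf1 : f 1 ≠ 0 := by
        intro h0
        apply hf
        ext q
        rw [key f q, h0, mul_zero]
        rfl
      refine isUnit_iff_exists.mpr
        ⟨⟨⟨fun q => q * (f 1)⁻¹, fun x y => add_mul x y _⟩,
          fun a q => by simp only [RingHom.id_apply, hsmul, mul_assoc]⟩, ?_, ?_⟩
      · ext q
        show f (q * (f 1)⁻¹) = q
        rw [key, mul_assoc, inv_mul_cancel₀ hf1, mul_one]
      · ext q
        show f q * (f 1)⁻¹ = q
        rw [key, mul_assoc, mul_inv_cancel₀ hf1, mul_one]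
  have hsimple := h Q hend
  intro a ha
  set sa : nonZeroDivisors A := ⟨a, mem_nonZeroDivisors_of_ne_zero ha⟩ with hsa
  rcases hsimple.1.2 (Submodule.span A {(1 : Q)}) with hb | ht
  · exfalso
    have h1 : (1 : Q) ∈ Submodule.span A {(1 : Q)} := Submodule.mem_span_singleton_self 1
    rw [hb, Submodule.mem_bot] at h1
    exact one_ne_zero h1
  · have hmem : ((1 : A) /ₒ sa : Q) ∈ Submodule.span A {(1 : Q)} := ht ▸ Submodule.mem_top
    obtain ⟨c, hc⟩ := Submodule.mem_span_singleton.mp hmem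
    rw [hsmul, mul_one] at hc
    have hac : (numeratorHom (a * c) : Q) = numeratorHom (1 : A) := by
      rw [map_mul, map_one, hc, numeratorHom_apply]
      exact OreLocalization.mul_inv sa 1
    have hle : nonZeroDivisors A ≤ nonZeroDivisorsLeft A := by
      intro x hx
      rw [mem_nonZeroDivisorsLeft_iff]
      intro y hy
      rcases mul_eq_zero.mp hy with h' | h'
      · exact absurd h' (nonZeroDivisors.ne_zero hx)
      · exact h'
    have hinj : Function.Injective (numeratorHom : A → Q) := numeratorHom_inj hle
    have hac' : a * c = 1 := hinj hac
    have hc0 : c ≠ 0 := by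
      intro h0
      rw [h0, mul_zero] at hac'
      exact zero_ne_one hac'
    have hca : c * a = 1 := by
      have : (c * a) * c = 1 * c := by rw [mul_assoc, hac', mul_one, one_mul]
      exact mul_right_cancel₀ hc0 this
    exact ⟨⟨a, c, hac', hca⟩, rfl⟩

/-- Backward auxiliary lemma: over a ring in which every nonzero element is a unit,
any module with division endomorphism ring is simple. -/
theorem div_aux (K : Type u) [Ring K] (hK : ∀ a : K, a ≠ 0 → IsUnit a)
    (M : Type u) [AddCommGroup M] [Module K M]
    (hM : EndIsDivisionRing K M) : IsSimpleModule K M := by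
  obtain ⟨hnt, hdiv⟩ := hM
  have hMnt : Nontrivial M := by
    by_contra hM'
    rw [not_nontrivial_iff_subsingleton] at hM'
    rcases hnt with ⟨f, g, hfg⟩
    exact hfg (LinearMap.ext fun x => Subsingleton.elim _ _)
  haveI : Nontrivial K := Module.nontrivial K M
  letI : DivisionRing K := DivisionRing.ofIsUnitOrEqZero fun a => by
    rcases eq_or_ne a 0 with h0 | h0
    · exact Or.inr h0
    · exact Or.inl (hK a h0)
  have key : ∀ (N : Submodule K M) (m : M), m ∈ N → m ≠ 0 → N = ⊤ := by
    intro N m hmN hm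
    obtain ⟨N', hc⟩ := N.exists_isCompl
    have hN' : N' = ⊥ := by
      by_contra hb
      obtain ⟨n, hnN', hn0⟩ := Submodule.exists_mem_ne_zero_of_ne_bot hb
      set e : Module.End K M := N.subtype ∘ₗ (N.projectionOnto N' hc) with he
      have hem : e m = m := by
        have := Submodule.linearProjOfIsCompl_apply_left hc ⟨m, hmN⟩
        simp [he, this]
      have he0 : e ≠ 0 := by
        intro h0
        rw [h0] at hem
        exact hm hem.symm
      have hinj := ((Module.End.isUnit_iff e).mp (hdiv e he0)).injective
      have hen : e n = e 0 := by
        have := Submodule.projectionOnto_apply_of_mem_right hc hnN'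
        simp [he, this]
      exact hn0 (hinj hen)
    rw [hN'] at hc
    simpa using hc.sup_eq_top
  refine { eq_bot_or_eq_top := ?_ }
  intro N
  rcases eq_or_ne N ⊥ with h0 | h0
  · exact Or.inl h0
  · obtain ⟨m, hmN, hm⟩ := Submodule.exists_mem_ne_zero_of_ne_bot h0
    exact Or.inr (key N m hmN hm)

/-- Let `R` be a domain satisfying the right Ore condition (any two nonzero
right ideals intersect nontrivially, i.e. for nonzero `a, b` one has `aR ∩ bR ≠ 0`).  Then
every right `R`-module whose endomorphism ring is a division ring is simple if and only if
`R` is a division ring. -/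
theorem ore_domain_csl_iff_divisionRing (R : Type u) [Ring R] [IsDomain R]
    (hOre : ∀ a b : R, a ≠ 0 → b ≠ 0 → ∃ x y : R, a * x = b * y ∧ a * x ≠ 0) :
    (∀ (M : Type u) [AddCommGroup M] [Module Rᵐᵒᵖ M],
        EndIsDivisionRing Rᵐᵒᵖ M → IsSimpleModule Rᵐᵒᵖ M) ↔
      ∀ a : R, a ≠ 0 → IsUnit a := by
  constructor
  · intro h a ha
    have hOre' : ∀ r s : Rᵐᵒᵖ, r ≠ 0 → s ≠ 0 →
        ∃ r' s' : Rᵐᵒᵖ, s' * r = r' * s ∧ s' * r ≠ 0 := by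
      intro r s hr hs
      obtain ⟨x, y, hxy, hne⟩ := hOre r.unop s.unop
        (fun h0 => hr ((MulOpposite.unop_eq_zero_iff r).mp h0))
        (fun h0 => hs ((MulOpposite.unop_eq_zero_iff s).mp h0))
      refine ⟨MulOpposite.op y, MulOpposite.op x, ?_, ?_⟩
      · apply MulOpposite.unop_injective
        simpa using hxy
      · intro h0
        apply hne
        have := congrArg MulOpposite.unop h0
        simpa using this
    have := ore_aux Rᵐᵒᵖ hOre' h (MulOpposite.op a)
      (fun h0 => ha ((MulOpposite.op_eq_zero_iff a).mp h0))
    exact this.unop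
  · intro hu M _ _ hM
    refine div_aux Rᵐᵒᵖ (fun b hb => ?_) M hM
    have : IsUnit b.unop := hu b.unop (fun h0 => hb ((MulOpposite.unop_eq_zero_iff b).mp h0))
    simpa using this.op
end
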